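/- There exist 2×2 complex Hermitian matrices A₀, A₁, B₀, B₁ with A_x² = 1 and B_y² = 1 (x, y ∈ {0,1}), and a unit vector ψ ∈ ℂ² ⊗ ℂ² (equivalently ψ : Fin 2 × Fin 2 → ℂ with Euclidean norm 1), such that ⟨ψ, (A₀⊗B₀ + A₀⊗B₁ + A₁⊗B₀ − A₁⊗B₁)ψ⟩ = 2√2, where ⊗ denotes the Kronecker product of matrices. Hence the Tsirelson bound 2√2 on the quantum CHSH value is attained, corresponding to a quantum winning probability of (2 + √2)/4. -/

import Mathlib

open Kronecker

/-- The Tsirelson bound is attained: there exist 2×2 Hermitian matrices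
`A₀, A₁, B₀, B₁` squaring to the identity and a unit vector
`ψ : Fin 2 × Fin 2 → ℂ` such that the quantum CHSH value
`⟨ψ, (A₀⊗B₀ + A₀⊗B₁ + A₁⊗B₀ − A₁⊗B₁)ψ⟩` equals `2√2`. -/
theorem tsirelson_bound_attained :
    ∃ (A₀ A₁ B₀ B₁ : Matrix (Fin 2) (Fin 2) ℂ) (ψ : Fin 2 × Fin 2 → ℂ),
      A₀.IsHermitian ∧ A₁.IsHermitian ∧ B₀.IsHermitian ∧ B₁.IsHermitian ∧
      A₀ * A₀ = 1 ∧ A₁ * A₁ = 1 ∧ B₀ * B₀ = 1 ∧ B₁ * B₁ = 1 ∧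
      (∑ i : Fin 2 × Fin 2, ‖ψ i‖ ^ 2) = 1 ∧
      (∑ i : Fin 2 × Fin 2,
          (starRingEnd ℂ) (ψ i) *
            ((A₀ ⊗ₖ B₀ + A₀ ⊗ₖ B₁ + A₁ ⊗ₖ B₀ - A₁ ⊗ₖ B₁).mulVec ψ i))
        = ((2 * Real.sqrt 2 : ℝ) : ℂ) := by
  have h2 : Real.sqrt 2 * Real.sqrt 2 = 2 := Real.mul_self_sqrt (by norm_num)
  have hne : (Real.sqrt 2 : ℝ) ≠ 0 := by positivity
  set c : ℂ := (((Real.sqrt 2)⁻¹ : ℝ) : ℂ)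
  have hc2 : c * c = 2⁻¹ := by
    simp only [c]
    rw [← Complex.ofReal_mul]
    rw [← mul_inv, h2]
    push_cast
    ring
  refine ⟨!![1,0;0,-1], !![0,1;1,0],
    c • !![1,1;1,-1], c • !![1,-1;-1,-1],
    fun i => if i.1 = i.2 then c else 0, ?_, ?_, ?_, ?_, ?_, ?_, ?_, ?_, ?_, ?_⟩
  · ext i j; fin_cases i <;> fin_cases j <;>
      simp [Matrix.conjTranspose_apply]
  · ext i j; fin_cases i <;> fin_cases j <;>
      simp [Matrix.conjTranspose_apply]
  · unfold Matrix.IsHermitian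
    rw [Matrix.conjTranspose_smul]
    have : star c = c := by simp [c, Complex.star_def, Complex.conj_ofReal]
    rw [this]
    congr 1
    ext i j; fin_cases i <;> fin_cases j <;>
      simp [Matrix.conjTranspose_apply]
  · unfold Matrix.IsHermitian
    rw [Matrix.conjTranspose_smul]
    have : star c = c := by simp [c, Complex.star_def, Complex.conj_ofReal]
    rw [this]
    congr 1
    ext i j; fin_cases i <;> fin_cases j <;>
      simp [Matrix.conjTranspose_apply]
  · ext i j; fin_cases i <;> fin_cases j <;>
      simp [Matrix.mul_apply, Fin.sum_univ_succ]
  · ext i j; fin_cases i <;> fin_cases j <;>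
      simp [Matrix.mul_apply, Fin.sum_univ_succ]
  · rw [Matrix.smul_mul, Matrix.mul_smul, smul_smul, hc2]
    ext i j; fin_cases i <;> fin_cases j <;>
      simp [Matrix.mul_apply, Fin.sum_univ_succ] <;> norm_num
  · rw [Matrix.smul_mul, Matrix.mul_smul, smul_smul, hc2]
    ext i j; fin_cases i <;> fin_cases j <;>
      simp [Matrix.mul_apply, Fin.sum_univ_succ] <;> norm_num
  · rw [Fintype.sum_prod_type, Fin.sum_univ_two, Fin.sum_univ_two, Fin.sum_univ_two]
    simp [c]
    norm_num
  · rw [Fintype.sum_prod_type]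
    simp only [Matrix.mulVec, dotProduct, Fintype.sum_prod_type,
      Matrix.add_apply, Matrix.sub_apply, Matrix.kroneckerMap_apply,
      Matrix.smul_apply, Fin.sum_univ_two]
    norm_num [Matrix.cons_val_zero, Matrix.cons_val_one, Matrix.head_cons, c]
    have hsne : ((Real.sqrt 2:ℝ):ℂ) ≠ 0 := by exact_mod_cast hne
    have hs : ((Real.sqrt 2:ℝ):ℂ) * ((Real.sqrt 2:ℝ):ℂ) = 2 := by
      rw [← Complex.ofReal_mul, h2]; norm_num

    field_simp
    linear_combination (-2*(((Real.sqrt 2:ℝ):ℂ)*((Real.sqrt 2:ℝ):ℂ)+2))*hs
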